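/- For every real σ with 0 < σ < 1 there exists a natural number n0 such that for every n ≥ n0 and every natural number m with m ≤ 0.99 · σ · n, there exists a (σ,2)-regular function f : {0,1}^n × {0,1}^n → {0,1}^m; that is, for all natural numbers k1, k2 with ⌈σn⌉ ≤ k1 ≤ n and ⌈σn⌉ ≤ k2 ≤ n, all sets B1, B2 ⊆ {0,1}^n with |B1| = 2^{k1} and |B2| = 2^{k2}, and every a ∈ {0,1}^m, one has 2^m · |{(u,v) ∈ B1 × B2 : f(u,v) = a}| ≤ 2 · 2^{k1} · 2^{k2}. -/

import Mathlib

open Finset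

lemma card_fun_eq (n m : ℕ) :
    (Finset.univ : Finset (((Fin n → Bool) × (Fin n → Bool)) → (Fin m → Bool))).card
      = (2 ^ m) ^ (2 ^ (2 * n)) := by
  simp [Finset.card_univ, Fintype.card_fun, Fintype.card_prod, two_mul, pow_add]

lemma mgf (n m : ℕ) (S : Finset ((Fin n → Bool) × (Fin n → Bool))) (a : Fin m → Bool) :
    ∑ f : ((Fin n → Bool) × (Fin n → Bool)) → (Fin m → Bool),
        (2:ℝ) ^ ((S.filter fun x => f x = a).card)
      = ((2:ℝ) ^ m + 1) ^ S.card * ((2:ℝ) ^ m) ^ (2 ^ (2 * n) - S.card) := by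
  have h1 : ∀ f : ((Fin n → Bool) × (Fin n → Bool)) → (Fin m → Bool),
      (2:ℝ) ^ ((S.filter fun x => f x = a).card)
        = ∏ x, (if x ∈ S ∧ f x = a then (2:ℝ) else 1) := by
    intro f
    rw [Finset.prod_ite, Finset.prod_const, Finset.prod_const, one_pow, mul_one]
    congr 2
    ext x
    simp [and_comm]
  simp only [h1]
  have hswap := Finset.prod_univ_sum (fun _ : (Fin n → Bool) × (Fin n → Bool) => (univ : Finset (Fin m → Bool)))
    (fun x r => if x ∈ S ∧ r = a then (2:ℝ) else 1)
  rw [← Fintype.piFinset_univ, ← hswap]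
  have h2 : ∀ x : (Fin n → Bool) × (Fin n → Bool),
      (∑ r : Fin m → Bool, if x ∈ S ∧ r = a then (2:ℝ) else 1)
        = if x ∈ S then ((2:ℝ) ^ m + 1) else (2:ℝ) ^ m := by
    intro x
    by_cases hx : x ∈ S
    · have : ∀ r : Fin m → Bool, (if x ∈ S ∧ r = a then (2:ℝ) else 1)
          = 1 + (if r = a then (1:ℝ) else 0) := by
        intro r; by_cases hr : r = a <;> simp [hx, hr] <;> norm_num
      rw [Finset.sum_congr rfl fun r _ => this r, Finset.sum_add_distrib, if_pos hx]
      simp [Fintype.card_fun]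
    · simp [hx, Fintype.card_fun]
  rw [Finset.prod_congr rfl fun x _ => h2 x, Finset.prod_ite, Finset.prod_const, Finset.prod_const]
  congr 2
  · congr 1; ext x; simp
  · have : Finset.univ.filter (fun x : (Fin n → Bool) × (Fin n → Bool) => ¬ x ∈ S) = Sᶜ := by
      ext x; simp
    rw [this, Finset.card_compl]
    congr 1
    simp [two_mul, pow_add]

lemma markov (n m : ℕ) (S : Finset ((Fin n → Bool) × (Fin n → Bool))) (a : Fin m → Bool) (t : ℕ) :
    ((Finset.univ.filter fun f : ((Fin n → Bool) × (Fin n → Bool)) → (Fin m → Bool) =>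
        t ≤ (S.filter fun x => f x = a).card).card : ℝ) * 2 ^ t
      ≤ ((2:ℝ) ^ m + 1) ^ S.card * ((2:ℝ) ^ m) ^ (2 ^ (2 * n) - S.card) := by
  rw [← mgf n m S a]
  calc ((Finset.univ.filter fun f : ((Fin n → Bool) × (Fin n → Bool)) → (Fin m → Bool) =>
        t ≤ (S.filter fun x => f x = a).card).card : ℝ) * 2 ^ t
      = ∑ _f ∈ (Finset.univ.filter fun f : ((Fin n → Bool) × (Fin n → Bool)) → (Fin m → Bool) =>
        t ≤ (S.filter fun x => f x = a).card), (2:ℝ) ^ t := by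
        rw [Finset.sum_const, nsmul_eq_mul]
    _ ≤ ∑ f ∈ (Finset.univ.filter fun f : ((Fin n → Bool) × (Fin n → Bool)) → (Fin m → Bool) =>
        t ≤ (S.filter fun x => f x = a).card), (2:ℝ) ^ ((S.filter fun x => f x = a).card) := by
        refine Finset.sum_le_sum fun f hf => ?_
        exact pow_le_pow_right₀ (by norm_num) (Finset.mem_filter.mp hf).2
    _ ≤ ∑ f : ((Fin n → Bool) × (Fin n → Bool)) → (Fin m → Bool),
          (2:ℝ) ^ ((S.filter fun x => f x = a).card) := by
        refine Finset.sum_le_sum_of_subset_of_nonneg (Finset.subset_univ _) fun f _ _ => by positivity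

lemma lemC {n m K k1 k2 : ℕ} (hn : 2 ≤ n) (hmK : m + 1 ≤ K) (h1 : K ≤ k1) (h2 : K ≤ k2)
    (hk1n : k1 ≤ n) (hk2n : k2 ≤ n) (hmn : m ≤ n) (hbig : 8 * n ≤ 2 ^ (K - (m + 1))) :
    2 * (n + 1) + n * 2 ^ k1 + n * 2 ^ k2 + m ≤ 2 ^ (k1 + k2 - (m + 1)) := by
  set kM := max k1 k2 with hkM
  have hsplit : k1 + k2 - (m + 1) = (K - (m + 1)) + (k1 + k2 - K) := by omega
  have hge : kM ≤ k1 + k2 - K := by omega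
  have h2kM : 2 ^ kM ≤ 2 ^ (k1 + k2 - K) := Nat.pow_le_pow_right (by norm_num) hge
  have hX : 2 ≤ 2 ^ kM := by
    have : 1 ≤ kM := le_trans (le_trans (by omega : 1 ≤ K) h1) (le_max_left _ _)
    calc 2 = 2 ^ 1 := rfl
    _ ≤ 2 ^ kM := Nat.pow_le_pow_right (by norm_num) this
  have hk1M : 2 ^ k1 ≤ 2 ^ kM := Nat.pow_le_pow_right (by norm_num) (le_max_left _ _)
  have hk2M : 2 ^ k2 ≤ 2 ^ kM := Nat.pow_le_pow_right (by norm_num) (le_max_right _ _)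
  calc 2 * (n + 1) + n * 2 ^ k1 + n * 2 ^ k2 + m ≤ 2 * (n + 1) + n * 2 ^ kM + n * 2 ^ kM + m := by
        have := Nat.mul_le_mul_left n hk1M
        have := Nat.mul_le_mul_left n hk2M
        omega
    _ ≤ (8 * n) * 2 ^ kM := by nlinarith
    _ ≤ 2 ^ (K - (m + 1)) * 2 ^ (k1 + k2 - K) := Nat.mul_le_mul hbig h2kM
    _ = 2 ^ (k1 + k2 - (m + 1)) := by rw [hsplit, pow_add]

lemma tuple_bound {n m K k1 k2 : ℕ} (hn : 2 ≤ n) (hmK : m + 1 ≤ K) (h1 : K ≤ k1) (h2 : K ≤ k2)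
    (hk1n : k1 ≤ n) (hk2n : k2 ≤ n) (hmn : m ≤ n) (hbig : 8 * n ≤ 2 ^ (K - (m + 1)))
    (B1 B2 : Finset (Fin n → Bool)) (hB1 : B1.card = 2 ^ k1) (hB2 : B2.card = 2 ^ k2)
    (a : Fin m → Bool) :
    ((Finset.univ.filter fun f : ((Fin n → Bool) × (Fin n → Bool)) → (Fin m → Bool) =>
        2 ^ (k1 + k2 + 1 - m) + 1 ≤ ((B1 ×ˢ B2).filter fun x => f x = a).card).card : ℝ)
      ≤ ((2:ℝ) ^ m) ^ (2 ^ (2 * n)) /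
          (2 * ((n:ℝ) + 1) ^ 2 * ((2:ℝ) ^ n) ^ (2 ^ k1) * ((2:ℝ) ^ n) ^ (2 ^ k2) * 2 ^ m) := by
  set μ := 2 ^ (k1 + k2 - (m + 1)) with hμ
  set N := 2 ^ (k1 + k2) with hNdef
  have hS : (B1 ×ˢ B2).card = N := by rw [Finset.card_product, hB1, hB2, ← pow_add]
  have he1 : k1 + k2 + 1 - m = (k1 + k2 - (m + 1)) + 2 := by omega
  have hNμ : N = 2 ^ (m + 1) * μ := by rw [hNdef, hμ, ← pow_add]; congr 1; omega
  have hND : N ≤ 2 ^ (2 * n) := Nat.pow_le_pow_right (by norm_num) (by omega)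
  have hmark := markov n m (B1 ×ˢ B2) a (2 ^ (k1 + k2 + 1 - m) + 1)
  rw [hS] at hmark
  -- rewrite the power of 2 on the LHS of markov
  have ht : ((2:ℝ)) ^ (2 ^ (k1 + k2 + 1 - m) + 1) = 2 * 16 ^ μ := by
    have he : 2 ^ (k1 + k2 + 1 - m) + 1 = 4 * μ + 1 := by
      rw [he1, hμ, pow_add]; ring
    rw [he, pow_succ, pow_mul]
    norm_num [mul_comm]
  -- Step A
  have hεpos : (0:ℝ) < ((2:ℝ) ^ m)⁻¹ := by positivity
  have hA : ((2:ℝ) ^ m + 1) ^ N ≤ Real.exp 1 ^ (2 * μ) * ((2:ℝ) ^ m) ^ N := by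
    have h0 : ((2:ℝ) ^ m + 1) = (2:ℝ) ^ m * (1 + ((2:ℝ) ^ m)⁻¹) := by
      field_simp
    rw [h0, mul_pow, mul_comm]
    refine mul_le_mul_of_nonneg_right ?_ (by positivity : (0:ℝ) ≤ ((2:ℝ) ^ m) ^ N)
    have hstep : (1 + ((2:ℝ) ^ m)⁻¹) ^ N ≤ Real.exp (((2:ℝ) ^ m)⁻¹) ^ N := by
      have h1e : (0:ℝ) ≤ 1 + ((2:ℝ) ^ m)⁻¹ := by positivity
      have h2e : (1:ℝ) + ((2:ℝ) ^ m)⁻¹ ≤ Real.exp (((2:ℝ) ^ m)⁻¹) := by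
        have := Real.add_one_le_exp (((2:ℝ) ^ m)⁻¹)
        linarith
      exact pow_le_pow_left₀ h1e h2e N
    refine hstep.trans ?_
    rw [← Real.exp_nat_mul, ← Real.exp_nat_mul]
    refine le_of_eq ?_
    congr 1
    have hNr : (N:ℝ) = (2:ℝ) ^ m * (2 * (μ:ℝ)) := by
      rw [hNμ]; push_cast [pow_succ]; ring
    rw [hNr]
    push_cast
    field_simp
  -- Step B
  have hB : Real.exp 1 ^ (2 * μ) ≤ (8:ℝ) ^ μ := by
    rw [pow_mul]
    refine pow_le_pow_left₀ (by positivity : (0:ℝ) ≤ Real.exp 1 ^ 2) ?_ μ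
    have he : Real.exp 1 ≤ 2.7182818286 := Real.exp_one_lt_d9.le
    calc Real.exp 1 ^ 2 ≤ (2.7182818286:ℝ) ^ 2 :=
          pow_le_pow_left₀ (Real.exp_pos 1).le he 2
      _ ≤ 8 := by norm_num
  -- Step C : nat inequality
  have hCnat : (n + 1) ^ 2 * (2 ^ n) ^ (2 ^ k1) * (2 ^ n) ^ (2 ^ k2) * 2 ^ m ≤ 2 ^ μ := by
    have hle : (n + 1) ^ 2 ≤ 2 ^ (2 * (n + 1)) := by
      have : n + 1 ≤ 2 ^ (n + 1) := (Nat.lt_two_pow_self (n := n + 1)).le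
      calc (n + 1) ^ 2 ≤ (2 ^ (n + 1)) ^ 2 := Nat.pow_le_pow_left this 2
        _ = 2 ^ (2 * (n + 1)) := by rw [← pow_mul, mul_comm]
    calc (n + 1) ^ 2 * (2 ^ n) ^ (2 ^ k1) * (2 ^ n) ^ (2 ^ k2) * 2 ^ m
        ≤ 2 ^ (2 * (n + 1)) * (2 ^ n) ^ (2 ^ k1) * (2 ^ n) ^ (2 ^ k2) * 2 ^ m := by
          exact Nat.mul_le_mul_right _ (Nat.mul_le_mul_right _ (Nat.mul_le_mul_right _ hle))
      _ = 2 ^ (2 * (n + 1) + n * 2 ^ k1 + n * 2 ^ k2 + m) := by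
          rw [← pow_mul, ← pow_mul, ← pow_add, ← pow_add, ← pow_add]
      _ ≤ 2 ^ (2 ^ (k1 + k2 - (m + 1))) :=
          Nat.pow_le_pow_right (by norm_num) (lemC hn hmK h1 h2 hk1n hk2n hmn hbig)
  have hC : ((n:ℝ) + 1) ^ 2 * ((2:ℝ) ^ n) ^ (2 ^ k1) * ((2:ℝ) ^ n) ^ (2 ^ k2) * 2 ^ m ≤ 2 ^ μ := by
    have := hCnat
    have h' : (((n + 1) ^ 2 * (2 ^ n) ^ (2 ^ k1) * (2 ^ n) ^ (2 ^ k2) * 2 ^ m : ℕ) : ℝ)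
        ≤ ((2 ^ μ : ℕ) : ℝ) := Nat.cast_le.mpr this
    push_cast at h'
    convert h' using 2 <;> norm_num
  -- assemble
  set C := ((Finset.univ.filter fun f : ((Fin n → Bool) × (Fin n → Bool)) → (Fin m → Bool) =>
        2 ^ (k1 + k2 + 1 - m) + 1 ≤ ((B1 ×ˢ B2).filter fun x => f x = a).card).card : ℝ) with hC0
  set Dm := 2 * ((n:ℝ) + 1) ^ 2 * ((2:ℝ) ^ n) ^ (2 ^ k1) * ((2:ℝ) ^ n) ^ (2 ^ k2) * 2 ^ m with hDm
  have hDmpos : 0 < Dm := by rw [hDm]; positivity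
  rw [le_div_iff₀ hDmpos]
  -- key: C * Dm * (2 * 16^μ) ≤ (2*16^μ) * T
  have hkey : C * Dm * (2 * 16 ^ μ) ≤ (2 * 16 ^ μ) * ((2:ℝ) ^ m) ^ (2 ^ (2 * n)) := by
    have hm2 : Dm * (((2:ℝ) ^ m + 1) ^ N * ((2:ℝ) ^ m) ^ (2 ^ (2 * n) - N))
        ≤ (2 * 16 ^ μ) * ((2:ℝ) ^ m) ^ (2 ^ (2 * n)) := by
      have hTsplit : ((2:ℝ) ^ m) ^ N * ((2:ℝ) ^ m) ^ (2 ^ (2 * n) - N)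
          = ((2:ℝ) ^ m) ^ (2 ^ (2 * n)) := by
        rw [← pow_add]
        congr 1
        omega
      calc Dm * (((2:ℝ) ^ m + 1) ^ N * ((2:ℝ) ^ m) ^ (2 ^ (2 * n) - N))
          ≤ Dm * ((Real.exp 1 ^ (2 * μ) * ((2:ℝ) ^ m) ^ N) * ((2:ℝ) ^ m) ^ (2 ^ (2 * n) - N)) := by
            refine mul_le_mul_of_nonneg_left ?_ hDmpos.le
            exact mul_le_mul_of_nonneg_right hA
              (by positivity : (0:ℝ) ≤ ((2:ℝ) ^ m) ^ (2 ^ (2 * n) - N))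
        _ = (2 * (((n:ℝ) + 1) ^ 2 * ((2:ℝ) ^ n) ^ (2 ^ k1) * ((2:ℝ) ^ n) ^ (2 ^ k2) * 2 ^ m)
              * Real.exp 1 ^ (2 * μ)) * ((2:ℝ) ^ m) ^ (2 ^ (2 * n)) := by
            rw [hDm, ← hTsplit]; ring
        _ ≤ (2 * (2 ^ μ) * (8 ^ μ)) * ((2:ℝ) ^ m) ^ (2 ^ (2 * n)) := by
            refine mul_le_mul_of_nonneg_right ?_
              (by positivity : (0:ℝ) ≤ ((2:ℝ) ^ m) ^ (2 ^ (2 * n)))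
            have h5 := mul_le_mul hC hB (by positivity : (0:ℝ) ≤ Real.exp 1 ^ (2 * μ))
              (by positivity : (0:ℝ) ≤ (2:ℝ) ^ μ)
            nlinarith [h5]
        _ = (2 * 16 ^ μ) * ((2:ℝ) ^ m) ^ (2 ^ (2 * n)) := by
            rw [mul_assoc 2, ← mul_pow]; norm_num
    calc C * Dm * (2 * 16 ^ μ) = Dm * (C * (2 * 16 ^ μ)) := by ring
      _ ≤ Dm * (((2:ℝ) ^ m + 1) ^ N * ((2:ℝ) ^ m) ^ (2 ^ (2 * n) - N)) := by
          refine mul_le_mul_of_nonneg_left ?_ hDmpos.le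
          rw [← ht]
          exact hmark
      _ ≤ (2 * 16 ^ μ) * ((2:ℝ) ^ m) ^ (2 ^ (2 * n)) := hm2
  have hpos16 : (0:ℝ) < 2 * 16 ^ μ := by positivity
  have hkey' : C * Dm * (2 * 16 ^ μ) ≤ ((2:ℝ) ^ m) ^ (2 ^ (2 * n)) * (2 * 16 ^ μ) := by
    linarith [hkey]
  exact le_of_mul_le_mul_right hkey' hpos16

theorem exists_regular_function (σ : ℝ) (hσ0 : 0 < σ) (hσ1 : σ < 1) :
    ∃ n0 : ℕ, ∀ n : ℕ, n0 ≤ n → ∀ m : ℕ, (m : ℝ) ≤ 0.99 * σ * n →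
      ∃ f : (Fin n → Bool) × (Fin n → Bool) → (Fin m → Bool),
        ∀ k1 k2 : ℕ, ⌈σ * n⌉₊ ≤ k1 → k1 ≤ n → ⌈σ * n⌉₊ ≤ k2 → k2 ≤ n →
          ∀ B1 B2 : Finset (Fin n → Bool), B1.card = 2 ^ k1 → B2.card = 2 ^ k2 →
            ∀ a : Fin m → Bool,
              (2 : ℝ) ^ m * (((B1 ×ˢ B2).filter (fun uv => f uv = a)).card : ℝ) ≤
                2 * (2 : ℝ) ^ k1 * (2 : ℝ) ^ k2 := by
  classical
  -- growth condition
  have hc : (0:ℝ) < 0.01 * σ := by nlinarith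
  have hrbig : (1:ℝ) < (2:ℝ) ^ (0.01 * σ) := by
    rw [show ((2:ℝ) ^ (0.01 * σ)) = Real.rpow 2 (0.01 * σ) from rfl]
    exact Real.one_lt_rpow_iff_of_pos (by norm_num) |>.mpr (Or.inl ⟨by norm_num, hc⟩)
  set r : ℝ := ((2:ℝ) ^ (0.01 * σ))⁻¹ with hrdef
  have hr0 : 0 ≤ r := by positivity
  have hr1 : r < 1 := by
    rw [hrdef]
    exact inv_lt_one_of_one_lt₀ hrbig
  have htend := tendsto_self_mul_const_pow_of_lt_one hr0 hr1
  have hev : ∀ᶠ k : ℕ in Filter.atTop, (k:ℝ) * r ^ k < 1 / 16 :=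
    htend.eventually_lt_const (by norm_num)
  obtain ⟨n2, hn2⟩ := Filter.eventually_atTop.mp hev
  refine ⟨max (max 2 ⌈σ⁻¹⌉₊) n2, fun n hn m hm => ?_⟩
  have hn2' : n2 ≤ n := le_trans (le_max_right _ _) hn
  have hnge2 : 2 ≤ n := le_trans (le_trans (le_max_left _ _) (le_max_left _ _)) hn
  have hninv : (⌈σ⁻¹⌉₊ : ℕ) ≤ n := le_trans (le_trans (le_max_right _ _) (le_max_left _ _)) hn
  have hσn1 : (1:ℝ) ≤ σ * n := by
    have h1 : σ⁻¹ ≤ (n:ℝ) := le_trans (Nat.le_ceil _) (Nat.cast_le.mpr hninv)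
    calc (1:ℝ) = σ * σ⁻¹ := by field_simp
      _ ≤ σ * n := by nlinarith
  set K := ⌈σ * (n:ℕ)⌉₊ with hK
  clear_value K
  have hσnK : σ * n ≤ (K:ℝ) := by rw [hK]; exact Nat.le_ceil _
  have hmKr : (m:ℝ) < (K:ℝ) := by
    calc (m:ℝ) ≤ 0.99 * σ * n := hm
      _ < σ * n := by nlinarith
      _ ≤ K := hσnK
  have hmK : m + 1 ≤ K := by exact_mod_cast Nat.succ_le_of_lt (by exact_mod_cast hmKr)
  have hKn : K ≤ n := by
    rw [hK]
    refine Nat.ceil_le.mpr ?_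
    nlinarith
  have hmn : m ≤ n := le_trans (by omega) hKn
  -- the big-n condition
  have hbig : 8 * n ≤ 2 ^ (K - (m + 1)) := by
    set j := K - (m + 1) with hj
    have hjr : 0.01 * σ * n - 1 ≤ (j:ℝ) := by
      have : (j:ℝ) = (K:ℝ) - (m:ℝ) - 1 := by
        rw [hj]
        push_cast [Nat.cast_sub hmK]
        ring
      rw [this]
      have : (m:ℝ) ≤ 0.99 * σ * n := hm
      nlinarith
    have h16 : (16:ℝ) * n < ((2:ℝ) ^ (0.01 * σ)) ^ n := by
      have := hn2 n hn2'
      have hpow : (0:ℝ) < ((2:ℝ) ^ (0.01 * σ)) ^ n := by positivity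
      rw [hrdef, inv_pow] at this
      calc (16:ℝ) * n = 16 * ((n:ℝ) * (((2:ℝ) ^ (0.01 * σ)) ^ n)⁻¹) * ((2:ℝ) ^ (0.01*σ)) ^ n := by
            field_simp
        _ < 16 * (1/16) * ((2:ℝ) ^ (0.01*σ)) ^ n := by
            apply mul_lt_mul_of_pos_right _ hpow
            exact mul_lt_mul_of_pos_left this (by norm_num)
        _ = ((2:ℝ) ^ (0.01*σ)) ^ n := by ring
    have hrn : ((2:ℝ) ^ (0.01 * σ)) ^ n = (2:ℝ) ^ (0.01 * σ * n) := by
      rw [← Real.rpow_natCast ((2:ℝ) ^ (0.01*σ)) n, ← Real.rpow_mul (by norm_num)]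
    have hfin : (8:ℝ) * n ≤ (2:ℝ) ^ (j:ℕ) := by
      have h2j : (2:ℝ) ^ (0.01 * σ * n - 1) ≤ (2:ℝ) ^ ((j:ℕ):ℝ) :=
        Real.rpow_le_rpow_of_exponent_le (by norm_num) hjr
      rw [Real.rpow_natCast] at h2j
      refine le_trans ?_ h2j
      rw [show 0.01 * σ * (n:ℝ) - 1 = 0.01 * σ * n + (-1) from by ring,
        Real.rpow_add (by norm_num), Real.rpow_neg_one, ← hrn]
      nlinarith [h16]
    exact_mod_cast hfin
  -- main counting argument
  by_contra hcon
  push_neg at hcon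
  set T : ℝ := ((2:ℝ) ^ m) ^ (2 ^ (2 * n)) with hT
  have hTpos : 0 < T := by rw [hT]; positivity
  -- each bad witness gives large count
  have hwit : ∀ f : ((Fin n → Bool) × (Fin n → Bool)) → (Fin m → Bool),
      ∃ k1 k2, (K ≤ k1 ∧ k1 ≤ n ∧ K ≤ k2 ∧ k2 ≤ n) ∧
        ∃ B1 B2 : Finset (Fin n → Bool), (B1.card = 2 ^ k1 ∧ B2.card = 2 ^ k2) ∧
          ∃ a, 2 ^ (k1 + k2 + 1 - m) + 1 ≤ ((B1 ×ˢ B2).filter fun x => f x = a).card := by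
    intro f
    obtain ⟨k1, k2, h1, h2, h3, h4, B1, B2, hB1, hB2, a, hlt⟩ := hcon f
    refine ⟨k1, k2, ⟨h1, h2, h3, h4⟩, B1, B2, ⟨hB1, hB2⟩, a, ?_⟩
    have hme : m + (k1 + k2 + 1 - m) = k1 + k2 + 1 := by omega
    by_contra hno
    push_neg at hno
    have hno' : (((B1 ×ˢ B2).filter fun x => f x = a).card : ℝ) ≤ ((2:ℕ) ^ (k1 + k2 + 1 - m) : ℕ) := by
      exact_mod_cast Nat.lt_succ_iff.mp hno
    have : (2:ℝ) ^ m * (((B1 ×ˢ B2).filter fun x => f x = a).card : ℝ)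
        ≤ 2 * (2:ℝ) ^ k1 * (2:ℝ) ^ k2 := by
      calc (2:ℝ) ^ m * (((B1 ×ˢ B2).filter fun x => f x = a).card : ℝ)
          ≤ (2:ℝ) ^ m * ((2:ℕ) ^ (k1 + k2 + 1 - m) : ℕ) := by
            exact mul_le_mul_of_nonneg_left hno' (by positivity)
        _ = 2 * (2:ℝ) ^ k1 * (2:ℝ) ^ k2 := by
            push_cast
            rw [← pow_add, hme, pow_succ, pow_add]
            ring
    exact absurd this (not_le.mpr hlt)
  -- union bound
  have hsub : (Finset.univ : Finset (((Fin n → Bool) × (Fin n → Bool)) → (Fin m → Bool)))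
      ⊆ (Finset.Icc K n ×ˢ Finset.Icc K n).biUnion (fun kk =>
          ((Finset.univ.powersetCard (2 ^ kk.1)) ×ˢ (Finset.univ.powersetCard (2 ^ kk.2))
              ×ˢ (Finset.univ : Finset (Fin m → Bool))).biUnion (fun w =>
            Finset.univ.filter (fun f : ((Fin n → Bool) × (Fin n → Bool)) → (Fin m → Bool) =>
              2 ^ (kk.1 + kk.2 + 1 - m) + 1 ≤ ((w.1 ×ˢ w.2.1).filter fun x => f x = w.2.2).card))) := by
    intro f _
    obtain ⟨k1, k2, ⟨h1, h2, h3, h4⟩, B1, B2, ⟨hB1, hB2⟩, a, hcnt⟩ := hwit f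
    rw [Finset.mem_biUnion]
    refine ⟨(k1, k2), ?_, ?_⟩
    · rw [Finset.mem_product]
      exact ⟨Finset.mem_Icc.mpr ⟨h1, h2⟩, Finset.mem_Icc.mpr ⟨h3, h4⟩⟩
    rw [Finset.mem_biUnion]
    refine ⟨(B1, B2, a), ?_, ?_⟩
    · rw [Finset.mem_product, Finset.mem_product]
      exact ⟨Finset.mem_powersetCard_univ.mpr hB1,
        Finset.mem_powersetCard_univ.mpr hB2, Finset.mem_univ a⟩
    · exact Finset.mem_filter.mpr ⟨Finset.mem_univ f, hcnt⟩
  -- counting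
  have hcard : (Finset.univ : Finset (((Fin n → Bool) × (Fin n → Bool)) → (Fin m → Bool))).card
      ≤ ∑ kk ∈ Finset.Icc K n ×ˢ Finset.Icc K n,
          ∑ w ∈ ((Finset.univ.powersetCard (2 ^ kk.1) : Finset (Finset (Fin n → Bool)))
              ×ˢ (Finset.univ.powersetCard (2 ^ kk.2)) ×ˢ (Finset.univ : Finset (Fin m → Bool))),
            (Finset.univ.filter (fun f : ((Fin n → Bool) × (Fin n → Bool)) → (Fin m → Bool) =>
              2 ^ (kk.1 + kk.2 + 1 - m) + 1 ≤
                ((w.1 ×ˢ w.2.1).filter fun x => f x = w.2.2).card)).card := by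
    refine (Finset.card_le_card hsub).trans ?_
    refine Finset.card_biUnion_le.trans ?_
    exact Finset.sum_le_sum fun kk _ => Finset.card_biUnion_le
  have hinner : ∀ kk ∈ Finset.Icc K n ×ˢ Finset.Icc K n,
      (∑ w ∈ ((Finset.univ.powersetCard (2 ^ kk.1) : Finset (Finset (Fin n → Bool)))
              ×ˢ (Finset.univ.powersetCard (2 ^ kk.2)) ×ˢ (Finset.univ : Finset (Fin m → Bool))),
        ((Finset.univ.filter (fun f : ((Fin n → Bool) × (Fin n → Bool)) → (Fin m → Bool) =>
              2 ^ (kk.1 + kk.2 + 1 - m) + 1 ≤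
                ((w.1 ×ˢ w.2.1).filter fun x => f x = w.2.2).card)).card : ℝ))
        ≤ T / (2 * ((n:ℝ) + 1) ^ 2) := by
    intro kk hkk
    rw [Finset.mem_product, Finset.mem_Icc, Finset.mem_Icc] at hkk
    obtain ⟨⟨hK1, h1n⟩, hK2, h2n⟩ := hkk
    set C1 : ℝ := ((2:ℝ) ^ n) ^ (2 ^ kk.1) with hC1
    set C2 : ℝ := ((2:ℝ) ^ n) ^ (2 ^ kk.2) with hC2
    have hC1pos : 0 < C1 := by rw [hC1]; positivity
    have hC2pos : 0 < C2 := by rw [hC2]; positivity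
    have hterm : ∀ w ∈ ((Finset.univ.powersetCard (2 ^ kk.1) : Finset (Finset (Fin n → Bool)))
              ×ˢ (Finset.univ.powersetCard (2 ^ kk.2)) ×ˢ (Finset.univ : Finset (Fin m → Bool))),
        ((Finset.univ.filter (fun f : ((Fin n → Bool) × (Fin n → Bool)) → (Fin m → Bool) =>
              2 ^ (kk.1 + kk.2 + 1 - m) + 1 ≤
                ((w.1 ×ˢ w.2.1).filter fun x => f x = w.2.2).card)).card : ℝ)
          ≤ T / (2 * ((n:ℝ) + 1) ^ 2 * C1 * C2 * 2 ^ m) := by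
      intro w hw
      rw [Finset.mem_product, Finset.mem_product] at hw
      exact tuple_bound hnge2 hmK hK1 hK2 h1n h2n hmn hbig w.1 w.2.1
        (Finset.mem_powersetCard_univ.mp hw.1) (Finset.mem_powersetCard_univ.mp hw.2.1) w.2.2
    have hJcard : ((((Finset.univ.powersetCard (2 ^ kk.1) : Finset (Finset (Fin n → Bool)))
              ×ˢ (Finset.univ.powersetCard (2 ^ kk.2) : Finset (Finset (Fin n → Bool)))
              ×ˢ (Finset.univ : Finset (Fin m → Bool))).card : ℝ)) ≤ C1 * C2 * 2 ^ m := by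
      rw [Finset.card_product, Finset.card_product, Finset.card_powersetCard,
        Finset.card_powersetCard, Finset.card_univ, Finset.card_univ]
      have e1 : Fintype.card (Fin n → Bool) = 2 ^ n := by simp
      have e2 : Fintype.card (Fin m → Bool) = 2 ^ m := by simp
      rw [e1, e2]
      have b1 : ((2 ^ n).choose (2 ^ kk.1) : ℝ) ≤ C1 := by
        rw [hC1]
        exact_mod_cast Nat.cast_le.mpr (Nat.choose_le_pow (2 ^ n) (2 ^ kk.1))
      have b2 : ((2 ^ n).choose (2 ^ kk.2) : ℝ) ≤ C2 := by
        rw [hC2]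
        exact_mod_cast Nat.cast_le.mpr (Nat.choose_le_pow (2 ^ n) (2 ^ kk.2))
      push_cast
      have hb1n : (0:ℝ) ≤ ((2 ^ n).choose (2 ^ kk.2) : ℝ) := by positivity
      calc ((2 ^ n).choose (2 ^ kk.1) : ℝ) * (((2 ^ n).choose (2 ^ kk.2) : ℝ) * 2 ^ m)
          ≤ C1 * (C2 * 2 ^ m) := by
            refine mul_le_mul b1 ?_ (by positivity) hC1pos.le
            exact mul_le_mul_of_nonneg_right b2 (by positivity)
        _ = C1 * C2 * 2 ^ m := by ring
    have hboundnn : (0:ℝ) ≤ T / (2 * ((n:ℝ) + 1) ^ 2 * C1 * C2 * 2 ^ m) := by positivity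
    calc (∑ w ∈ ((Finset.univ.powersetCard (2 ^ kk.1) : Finset (Finset (Fin n → Bool)))
              ×ˢ (Finset.univ.powersetCard (2 ^ kk.2)) ×ˢ (Finset.univ : Finset (Fin m → Bool))),
        ((Finset.univ.filter (fun f : ((Fin n → Bool) × (Fin n → Bool)) → (Fin m → Bool) =>
              2 ^ (kk.1 + kk.2 + 1 - m) + 1 ≤
                ((w.1 ×ˢ w.2.1).filter fun x => f x = w.2.2).card)).card : ℝ))
        ≤ ∑ _w ∈ ((Finset.univ.powersetCard (2 ^ kk.1) : Finset (Finset (Fin n → Bool)))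
              ×ˢ (Finset.univ.powersetCard (2 ^ kk.2)) ×ˢ (Finset.univ : Finset (Fin m → Bool))),
            (T / (2 * ((n:ℝ) + 1) ^ 2 * C1 * C2 * 2 ^ m)) := Finset.sum_le_sum hterm
      _ = ((((Finset.univ.powersetCard (2 ^ kk.1) : Finset (Finset (Fin n → Bool)))
              ×ˢ (Finset.univ.powersetCard (2 ^ kk.2))
              ×ˢ (Finset.univ : Finset (Fin m → Bool))).card : ℝ))
            * (T / (2 * ((n:ℝ) + 1) ^ 2 * C1 * C2 * 2 ^ m)) := by
          rw [Finset.sum_const, nsmul_eq_mul]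
      _ ≤ (C1 * C2 * 2 ^ m) * (T / (2 * ((n:ℝ) + 1) ^ 2 * C1 * C2 * 2 ^ m)) :=
          mul_le_mul_of_nonneg_right hJcard hboundnn
      _ = T / (2 * ((n:ℝ) + 1) ^ 2) := by
          field_simp
  -- put everything together
  have hreal : (((Finset.univ : Finset (((Fin n → Bool) × (Fin n → Bool)) → (Fin m → Bool))).card : ℝ))
      ≤ ((n:ℝ) + 1) ^ 2 * (T / (2 * ((n:ℝ) + 1) ^ 2)) := by
    have h1 : (((Finset.univ : Finset (((Fin n → Bool) × (Fin n → Bool)) → (Fin m → Bool))).card : ℝ))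
        ≤ ∑ kk ∈ Finset.Icc K n ×ˢ Finset.Icc K n,
          (∑ w ∈ ((Finset.univ.powersetCard (2 ^ kk.1) : Finset (Finset (Fin n → Bool)))
              ×ˢ (Finset.univ.powersetCard (2 ^ kk.2)) ×ˢ (Finset.univ : Finset (Fin m → Bool))),
            ((Finset.univ.filter (fun f : ((Fin n → Bool) × (Fin n → Bool)) → (Fin m → Bool) =>
              2 ^ (kk.1 + kk.2 + 1 - m) + 1 ≤
                ((w.1 ×ˢ w.2.1).filter fun x => f x = w.2.2).card)).card : ℝ)) := by
      have h0 := (Nat.cast_le (α := ℝ)).mpr hcard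
      push_cast at h0
      exact h0
    refine h1.trans ?_
    have h2 : ∑ kk ∈ Finset.Icc K n ×ˢ Finset.Icc K n,
          (∑ w ∈ ((Finset.univ.powersetCard (2 ^ kk.1) : Finset (Finset (Fin n → Bool)))
              ×ˢ (Finset.univ.powersetCard (2 ^ kk.2)) ×ˢ (Finset.univ : Finset (Fin m → Bool))),
            ((Finset.univ.filter (fun f : ((Fin n → Bool) × (Fin n → Bool)) → (Fin m → Bool) =>
              2 ^ (kk.1 + kk.2 + 1 - m) + 1 ≤
                ((w.1 ×ˢ w.2.1).filter fun x => f x = w.2.2).card)).card : ℝ))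
        ≤ ∑ _kk ∈ Finset.Icc K n ×ˢ Finset.Icc K n, T / (2 * ((n:ℝ) + 1) ^ 2) :=
      Finset.sum_le_sum hinner
    refine h2.trans ?_
    rw [Finset.sum_const, nsmul_eq_mul]
    refine mul_le_mul_of_nonneg_right ?_ (by positivity : (0:ℝ) ≤ T / (2 * ((n:ℝ) + 1) ^ 2))
    have hnat : (Finset.Icc K n ×ˢ Finset.Icc K n).card ≤ (n + 1) * (n + 1) := by
      have hle : (Finset.Icc K n).card ≤ n + 1 := by
        have hcc := Nat.card_Icc K n
        exact hcc.le.trans (Nat.sub_le _ _)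
      rw [Finset.card_product]
      exact Nat.mul_le_mul hle hle
    calc ((Finset.Icc K n ×ˢ Finset.Icc K n).card : ℝ) ≤ (((n + 1) * (n + 1) : ℕ) : ℝ) := by
          exact_mod_cast hnat
      _ = ((n:ℝ) + 1) ^ 2 := by push_cast; ring
  have hTc : (((Finset.univ : Finset (((Fin n → Bool) × (Fin n → Bool)) → (Fin m → Bool))).card : ℝ)) = T := by
    rw [hT]
    exact_mod_cast card_fun_eq n m
  rw [hTc] at hreal
  have : ((n:ℝ) + 1) ^ 2 * (T / (2 * ((n:ℝ) + 1) ^ 2)) = T / 2 := by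
    field_simp
  rw [this] at hreal
  linarith
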